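/- Let n ≥ 3, k = 2, I_j = {1,j} for 2 ≤ j ≤ n, and ξ(x) = ∏_{j=2}^n ω_{I_j}(π_{I_j}(x)) for x ∈ ℤ^n, where the ω_{I_j} are independent Bernoulli site percolation configurations on ℤ^2_{I_j} with parameters p_{I_j}. Let B = ([0,N] × [0,m_2] × ... × [0,m_n]) ∩ ℤ^n. Then the probability that ξ has a bottom-to-top crossing of B equals the product over j = 2,...,n of the probabilities that ω_{I_j} has a bottom-to-top crossing of the rectangle π_{I_j}(B): ℙ(ξ ∈ 𝓑𝓣(B)) = ∏_{j=2}^n ℙ_{p_{I_j}}(𝓑𝓣(π_{I_j}(B))). -/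

import Mathlib

open MeasureTheory ProbabilityTheory

namespace BernoulliHyperplane

variable {n : ℕ}

/-- Nearest-neighbor adjacency in `ℤⁿ` (`l¹`-distance one). -/
def latAdj (v w : Fin n → ℤ) : Prop := (∑ i, |v i - w i|) = 1

/-- Coordinate projection onto the sublattice spanned by the coordinates in `J`. -/
def proj (J : Finset (Fin n)) (v : Fin n → ℤ) : Fin n → ℤ := fun i => if i ∈ J then v i else 0

/-- The open cluster of `x` inside the set of sites `S`, for the openness predicate `good`:
all sites reachable from `x` by nearest-neighbor paths of `good` sites staying in `S`. -/
def clusterIn (S : Set (Fin n → ℤ)) (good : (Fin n → ℤ) → Prop) (x : Fin n → ℤ) :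
    Set (Fin n → ℤ) :=
  {v | (x ∈ S ∧ good x) ∧ Relation.ReflTransGen (fun u w => latAdj u w ∧ w ∈ S ∧ good w) x v}

/-- A site of `ℤⁿ` is open in `(n,k)`-hyperplane percolation iff all its projections onto the
`k`-dimensional coordinate sublattices are open. -/
def hpOpen (k : ℕ) (f : Finset (Fin n) → (Fin n → ℤ) → Bool) (v : Fin n → ℤ) : Prop :=
  ∀ J : Finset (Fin n), J.card = k → f J (proj J v) = true

/-- `(f v)_{v ∈ ℤᵈ}` is an i.i.d. Bernoulli(`p`) random field on `ℤᵈ` under `μ`. -/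
def IsBernoulliField (d : ℕ) (p : ℝ) {Ω : Type} [MeasurableSpace Ω] (μ : Measure Ω)
    (f : (Fin d → ℤ) → Ω → Bool) : Prop :=
  IsProbabilityMeasure μ ∧ (∀ v, Measurable (f v)) ∧
    iIndepFun f μ ∧
    ∀ v, μ {a | f v a = true} = ENNReal.ofReal p

/-- The critical probability of Bernoulli site percolation on `ℤᵈ`: the supremum of the
parameters `p ∈ [0,1]` for which every i.i.d. Bernoulli(`p`) field on `ℤᵈ` has no infinite
open cluster at the origin almost surely. -/
noncomputable def pcSite (d : ℕ) : ℝ :=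
  sSup {p : ℝ | p ∈ Set.Icc (0:ℝ) 1 ∧
    ∀ (Ω : Type) (_ : MeasurableSpace Ω) (μ : Measure Ω) (f : (Fin d → ℤ) → Ω → Bool),
      IsBernoulliField d p μ f →
      μ {a | (clusterIn Set.univ (fun v => f v a = true) 0).Infinite} = 0}

/-- The random fields `(F J v)` (for `J` a `k`-subset of `[n]` and `v` in the sublattice `ℤᵏ_J`)
form independent i.i.d. Bernoulli(`p J`) fields: this is Bernoulli `(n,k)`-hyperplane
percolation with parameter vector `p`. -/
def IsHyperplanePercolation (n k : ℕ) (p : Finset (Fin n) → ℝ) {Ω : Type} [MeasurableSpace Ω]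
    (μ : Measure Ω) (F : Finset (Fin n) → (Fin n → ℤ) → Ω → Bool) : Prop :=
  IsProbabilityMeasure μ ∧ (∀ J v, Measurable (F J v)) ∧
    iIndepFun
      (fun (q : {q : Finset (Fin n) × (Fin n → ℤ) // q.1.card = k ∧ ∀ i ∉ q.1, q.2 i = 0}) a =>
        F q.1.1 q.1.2 a) μ ∧
    ∀ J : Finset (Fin n), J.card = k → ∀ v : Fin n → ℤ, (∀ i ∉ J, v i = 0) →
      μ {a | F J v a = true} = ENNReal.ofReal (p J)

/-- Bottom-to-top crossing of the box `B = ∏ [0, m i]` in the height coordinate `e0`,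
through sites satisfying `good`. -/
def btBox (e0 : Fin n) (m : Fin n → ℕ) (good : (Fin n → ℤ) → Prop) : Prop :=
  ∃ (T : ℕ) (x : ℕ → Fin n → ℤ),
    (∀ t ≤ T, (∀ i, 0 ≤ x t i ∧ x t i ≤ (m i : ℤ)) ∧ good (x t)) ∧
    (∀ t < T, latAdj (x t) (x (t + 1))) ∧ x 0 e0 = 0 ∧ x T e0 = (m e0 : ℤ)

/-- Bottom-to-top crossing of the projected rectangle `π_{I_j}(B)` (inside the coordinate
plane spanned by `e0` and `j`) in the height coordinate `e0`, through sites satisfying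
`good`. -/
def btPlane (e0 j : Fin n) (m : Fin n → ℕ) (good : (Fin n → ℤ) → Prop) : Prop :=
  ∃ (T : ℕ) (x : ℕ → Fin n → ℤ),
    (∀ t ≤ T, (0 ≤ x t e0 ∧ x t e0 ≤ (m e0 : ℤ)) ∧ (0 ≤ x t j ∧ x t j ≤ (m j : ℤ)) ∧
      (∀ i, i ≠ e0 → i ≠ j → x t i = 0) ∧ good (x t)) ∧
    (∀ t < T, latAdj (x t) (x (t + 1))) ∧ x 0 e0 = 0 ∧ x T e0 = (m e0 : ℤ)



section Aux

section Paths

variable {α : Type*}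

/-- A path of `good` points along relation `R` from `a` to `b`. -/
def PathFrom (P : α → Prop) (R : α → α → Prop) (a b : α) : Prop :=
  ∃ (T : ℕ) (x : ℕ → α), (∀ t ≤ T, P (x t)) ∧ (∀ t < T, R (x t) (x (t+1))) ∧ x 0 = a ∧ x T = b

lemma PathFrom.refl {P : α → Prop} {R : α → α → Prop} {a : α} (ha : P a) :
    PathFrom P R a a :=
  ⟨0, fun _ => a, fun _ _ => ha, fun t ht => absurd ht (Nat.not_lt_zero t), rfl, rfl⟩

lemma PathFrom.trans {P : α → Prop} {R : α → α → Prop} {a b c : α}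
    (h1 : PathFrom P R a b) (h2 : PathFrom P R b c) : PathFrom P R a c := by
  obtain ⟨T1, x, hPx, hRx, hx0, hxT⟩ := h1
  obtain ⟨T2, y, hPy, hRy, hy0, hyT⟩ := h2
  refine ⟨T1 + T2, fun t => if t ≤ T1 then x t else y (t - T1), ?_, ?_, ?_, ?_⟩
  · intro t ht
    by_cases h : t ≤ T1
    · simpa [h] using hPx t h
    · simp only [h, if_false]
      exact hPy (t - T1) (by omega)
  · intro t ht
    by_cases h : t + 1 ≤ T1
    · simp only [show t ≤ T1 by omega, if_true, h, if_true]
      exact hRx t (by omega)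
    · by_cases h' : t ≤ T1
      · have htT : t = T1 := by omega
        subst htT
        simp only [le_refl, if_true, h, if_false, show t + 1 - t = 1 by omega]
        rw [hxT, ← hy0]
        exact hRy 0 (by omega)
      · simp only [h', if_false, h, if_false]
        have : t + 1 - T1 = (t - T1) + 1 := by omega
        rw [this]
        exact hRy (t - T1) (by omega)
  · simp [hx0]
  · by_cases h : T1 + T2 ≤ T1
    · have hT2 : T2 = 0 := by omega
      subst hT2
      simp only [Nat.add_zero, le_refl, if_true]
      rw [hxT, ← hy0]; exact hyT
    · simp only [h, if_false, Nat.add_sub_cancel_left]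
      exact hyT

lemma PathFrom.single {P : α → Prop} {R : α → α → Prop} {a b : α}
    (ha : P a) (hb : P b) (hab : R a b) : PathFrom P R a b := by
  refine ⟨1, fun t => if t = 0 then a else b, ?_, ?_, ?_, ?_⟩
  · intro t ht; by_cases h : t = 0 <;> simp [h, ha, hb]
  · intro t ht
    have : t = 0 := by omega
    simp [this, hab]
  · simp
  · simp

lemma PathFrom.mono {P Q : α → Prop} {R S : α → α → Prop} {a b : α}
    (hPQ : ∀ x, P x → Q x) (hRS : ∀ x y, R x y → S x y)
    (h : PathFrom P R a b) : PathFrom Q S a b := by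
  obtain ⟨T, x, hP, hR, h0, hT⟩ := h
  exact ⟨T, x, fun t ht => hPQ _ (hP t ht), fun t ht => hRS _ _ (hR t ht), h0, hT⟩

/-- Remove stuttering steps. -/
lemma PathFrom.of_lazy {P : α → Prop} {R : α → α → Prop} {a b : α}
    (h : PathFrom P (fun u v => R u v ∨ u = v) a b) : PathFrom P R a b := by
  obtain ⟨T, x, hP, hR, h0, hT⟩ := h
  subst h0 hT
  induction T with
  | zero => exact PathFrom.refl (hP 0 le_rfl)
  | succ T ih =>
    have h1 : PathFrom P R (x 0) (x T) :=
      ih (fun t ht => hP t (by omega)) (fun t ht => hR t (by omega))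
    rcases hR T (by omega) with h2 | h2
    · exact h1.trans (PathFrom.single (hP T (by omega)) (hP (T+1) le_rfl) h2)
    · rwa [← h2]

end Paths

lemma PathFrom.map {α β : Type*} {P : α → Prop} {R : α → α → Prop}
    {P' : β → Prop} {R' : β → β → Prop} (f : α → β)
    (hP : ∀ x, P x → P' (f x)) (hR : ∀ x y, R x y → R' (f x) (f y)) {a b : α}
    (h : PathFrom P R a b) : PathFrom P' R' (f a) (f b) := by
  obtain ⟨T, x, h1, h2, h3, h4⟩ := h
  exact ⟨T, fun t => f (x t), fun t ht => hP _ (h1 t ht), fun t ht => hR _ _ (h2 t ht),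
    by show f (x 0) = f a; rw [h3], by show f (x T) = f b; rw [h4]⟩


lemma latAdj_iff {n : ℕ} {v w : Fin n → ℤ} :
    latAdj v w ↔ ∃ i0, |v i0 - w i0| = 1 ∧ ∀ i, i ≠ i0 → v i = w i := by
  constructor
  · intro h
    unfold latAdj at h
    have hne : ∃ i, v i ≠ w i := by
      by_contra hc
      push_neg at hc
      simp [hc] at h
    obtain ⟨i0, hi0⟩ := hne
    have h1 : 1 ≤ |v i0 - w i0| := Int.one_le_abs (sub_ne_zero.2 hi0)
    have hsplit : ∑ i, |v i - w i| = |v i0 - w i0| + ∑ i ∈ Finset.univ.erase i0, |v i - w i| :=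
      (Finset.add_sum_erase _ _ (Finset.mem_univ i0)).symm
    have hrest_nonneg : 0 ≤ ∑ i ∈ Finset.univ.erase i0, |v i - w i| :=
      Finset.sum_nonneg fun i _ => abs_nonneg _
    have habs : |v i0 - w i0| = 1 := by omega
    have hrest : ∑ i ∈ Finset.univ.erase i0, |v i - w i| = 0 := by omega
    refine ⟨i0, habs, fun i hi => ?_⟩
    have := (Finset.sum_eq_zero_iff_of_nonneg (fun i _ => abs_nonneg (v i - w i))).1 hrest i
      (Finset.mem_erase.2 ⟨hi, Finset.mem_univ i⟩)
    have := abs_eq_zero.1 this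
    omega
  · rintro ⟨i0, habs, hrest⟩
    unfold latAdj
    rw [Finset.sum_eq_single i0]
    · exact habs
    · intro i _ hi
      rw [hrest i hi]; simp
    · intro h; exact absurd (Finset.mem_univ i0) h

lemma latAdj.symm {n : ℕ} {v w : Fin n → ℤ} (h : latAdj v w) : latAdj w v := by
  unfold latAdj at *
  rw [← h]
  exact Finset.sum_congr rfl fun i _ => abs_sub_comm _ _

/-- the projection of a nearest-neighbor step is a step or constant -/
lemma latAdj_proj {n : ℕ} (J : Finset (Fin n)) {v w : Fin n → ℤ} (h : latAdj v w) :
    latAdj (proj J v) (proj J w) ∨ proj J v = proj J w := by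
  obtain ⟨i0, habs, hrest⟩ := latAdj_iff.1 h
  by_cases hi0 : i0 ∈ J
  · left
    refine latAdj_iff.2 ⟨i0, ?_, fun i hi => ?_⟩
    · simp [proj, hi0, habs]
    · by_cases hiJ : i ∈ J <;> simp [proj, hiJ, hrest i hi]
  · right
    funext i
    by_cases hiJ : i ∈ J
    · have : i ≠ i0 := fun he => hi0 (he ▸ hiJ)
      simp [proj, hiJ, hrest i this]
    · simp [proj, hiJ]


/-- unit-step walk on `[0,L]`. -/
def UWalk (L : ℕ) (w : ℕ → ℤ) : Prop :=
  ∀ t < L, w (t+1) - w t = 1 ∨ w (t+1) - w t = -1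

/-- a diagonal step in the synchronization grid -/
def dstep (a b : ℕ) : Prop := b = a + 1 ∨ a = b + 1

def SyncR : ℕ × ℕ → ℕ × ℕ → Prop := fun p q => dstep p.1 q.1 ∧ dstep p.2 q.2

def SyncP (L1 L2 : ℕ) (u v : ℕ → ℤ) : ℕ × ℕ → Prop :=
  fun p => p.1 ≤ L1 ∧ p.2 ≤ L2 ∧ u p.1 = v p.2

/-- Discrete mountain climbing. -/
lemma dmcp (fuel : ℕ) : ∀ (L1 L2 : ℕ), L1 + L2 ≤ fuel → ∀ (N : ℕ) (u v : ℕ → ℤ),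
    UWalk L1 u → UWalk L2 v → u 0 = 0 → v 0 = 0 → u L1 = N → v L2 = N →
    (∀ t ≤ L1, 0 ≤ u t ∧ u t ≤ N) → (∀ t ≤ L2, 0 ≤ v t ∧ v t ≤ N) →
    ∃ a b, u a = N ∧ PathFrom (SyncP L1 L2 u v) SyncR (0, 0) (a, b) := by
  induction fuel with
  | zero =>
    intro L1 L2 hL N u v _ _ hu0 hv0 huL _ _ _
    have h1 : L1 = 0 := by omega
    have hN : (N : ℤ) = 0 := by rw [← huL, h1, hu0]
    refine ⟨0, 0, by rw [hu0]; exact hN.symm,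
      PathFrom.refl ⟨Nat.zero_le _, Nat.zero_le _, by rw [hu0, hv0]⟩⟩
  | succ fuel ih =>
    intro L1 L2 hL N u v hu hv hu0 hv0 huL hvL hub hvb
    by_cases hN : N = 0
    · subst hN
      exact ⟨0, 0, by rw [hu0]; rfl, PathFrom.refl ⟨Nat.zero_le _, Nat.zero_le _, by rw [hu0, hv0]⟩⟩
    -- N ≥ 1, hence L1, L2 ≥ 1
    have hL1 : 1 ≤ L1 := by
      rcases Nat.eq_zero_or_pos L1 with h | h
      · exfalso; apply hN; rw [h] at huL; rw [hu0] at huL; omega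
      · omega
    have hL2 : 1 ≤ L2 := by
      rcases Nat.eq_zero_or_pos L2 with h | h
      · exfalso; apply hN; rw [h] at hvL; rw [hv0] at hvL; omega
      · omega
    classical
    set reach : ℕ × ℕ → Prop := fun p => PathFrom (SyncP L1 L2 u v) SyncR (0, 0) p with hreach
    let G : SimpleGraph (Fin (L1+1) × Fin (L2+1)) :=
      { Adj := fun p q => dstep (p.1 : ℕ) (q.1 : ℕ) ∧ dstep (p.2 : ℕ) (q.2 : ℕ) ∧
          u (p.1 : ℕ) = v (p.2 : ℕ) ∧ u (q.1 : ℕ) = v (q.2 : ℕ) ∧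
          reach ((p.1 : ℕ), (p.2 : ℕ)) ∧ reach ((q.1 : ℕ), (q.2 : ℕ))
        symm := by
          constructor
          rintro p q ⟨h1, h2, h3, h4, h5, h6⟩
          refine ⟨?_, ?_, h4, h3, h6, h5⟩ <;> unfold dstep at * <;> omega
        loopless := by
          constructor
          rintro p ⟨h1, _⟩
          unfold dstep at h1; omega }
    haveI : DecidableRel G.Adj := Classical.decRel _
    have hAdj : ∀ p q, G.Adj p q ↔ (dstep (p.1 : ℕ) (q.1 : ℕ) ∧ dstep (p.2 : ℕ) (q.2 : ℕ) ∧
          u (p.1 : ℕ) = v (p.2 : ℕ) ∧ u (q.1 : ℕ) = v (q.2 : ℕ) ∧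
          reach ((p.1 : ℕ), (p.2 : ℕ)) ∧ reach ((q.1 : ℕ), (q.2 : ℕ))) := fun p q => Iff.rfl
    set origin : Fin (L1+1) × Fin (L2+1) := (⟨0, by omega⟩, ⟨0, by omega⟩) with horigin
    have hu1 : u 1 = 1 := by
      rcases hu 0 (by omega) with h | h <;> simp only [zero_add] at h <;> rw [hu0] at h
      · omega
      · exfalso; have := (hub 1 (by omega)).1; omega
    have hv1 : v 1 = 1 := by
      rcases hv 0 (by omega) with h | h <;> simp only [zero_add] at h <;> rw [hv0] at h
      · omega
      · exfalso; have := (hvb 1 (by omega)).1; omega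
    have hreach_origin : reach (0, 0) :=
      PathFrom.refl ⟨Nat.zero_le _, Nat.zero_le _, by rw [hu0, hv0]⟩
    have hreach11 : reach (1, 1) := by
      refine PathFrom.single ⟨Nat.zero_le _, Nat.zero_le _, by rw [hu0, hv0]⟩
        ⟨by omega, by omega, by rw [hu1, hv1]⟩ ⟨Or.inl rfl, Or.inl rfl⟩
    have hdeg_origin : G.degree origin = 1 := by
      have : G.neighborFinset origin = {(⟨1, by omega⟩, ⟨1, by omega⟩)} := by
        ext q
        rw [SimpleGraph.mem_neighborFinset, hAdj]
        constructor
        · rintro ⟨h1, h2, -, -, -, -⟩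
          have hq1 : (q.1 : ℕ) = 1 := by unfold dstep at h1; simp only [horigin] at h1; omega
          have hq2 : (q.2 : ℕ) = 1 := by unfold dstep at h2; simp only [horigin] at h2; omega
          rw [Finset.mem_singleton]
          ext
          · exact hq1
          · exact hq2
        · intro hq
          rw [Finset.mem_singleton] at hq
          subst hq
          exact ⟨Or.inl rfl, Or.inl rfl, by simp [horigin, hu0, hv0],
            by simp [hu1, hv1], hreach_origin, hreach11⟩
      rw [SimpleGraph.degree, this, Finset.card_singleton]
    obtain ⟨y, hy_ne, hy_odd⟩ : ∃ y, y ≠ origin ∧ Odd (G.degree y) :=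
      G.exists_ne_odd_degree_of_exists_odd_degree origin (by rw [hdeg_origin]; exact odd_one)
    -- extract basic facts about y
    obtain ⟨q, hq⟩ : ∃ q, G.Adj y q := by
      have : G.degree y ≠ 0 := by rcases hy_odd with ⟨k, hk⟩; omega
      rw [← SimpleGraph.card_neighborFinset_eq_degree] at this
      obtain ⟨q, hq⟩ := Finset.card_ne_zero.1 this
      exact ⟨q, (SimpleGraph.mem_neighborFinset _ _ _).1 hq⟩
    have huvy : u (y.1 : ℕ) = v (y.2 : ℕ) := ((hAdj _ _).1 hq).2.2.1
    have hreachy : reach ((y.1 : ℕ), (y.2 : ℕ)) := ((hAdj _ _).1 hq).2.2.2.2.1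
    set a := (y.1 : ℕ) with ha
    set b := (y.2 : ℕ) with hb
    have haL : a ≤ L1 := by omega
    have hbL : b ≤ L2 := by omega
    by_cases haL1 : a = L1
    · exact ⟨a, b, by rw [haL1]; exact huL, hreachy⟩
    by_cases hbL2 : b = L2
    · exact ⟨a, b, by rw [huvy, hbL2]; exact hvL, hreachy⟩
    by_cases hab0 : a = 0 ∧ b = 0
    · exfalso
      apply hy_ne
      rw [Prod.ext_iff]
      constructor
      · rw [Fin.ext_iff]; simp only [horigin]; omega
      · rw [Fin.ext_iff]; simp only [horigin]; omega
    by_cases ha0 : a = 0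
    · -- recurse on the tail of v
      have hb1 : 1 ≤ b := by
        rcases Nat.eq_zero_or_pos b with h | h
        · exact absurd ⟨ha0, h⟩ hab0
        · omega
      have hvb0 : v b = 0 := by rw [← huvy, ha0, hu0]
      obtain ⟨a', b', hua', path'⟩ := ih L1 (L2 - b) (by omega) N u (fun t => v (b + t))
        hu
        (fun t ht => by
          show v (b + (t+1)) - v (b + t) = 1 ∨ v (b + (t+1)) - v (b + t) = -1
          rw [show b + (t+1) = (b+t)+1 by omega]
          exact hv (b+t) (by omega))
        hu0
        (by show v (b + 0) = 0; rw [Nat.add_zero]; exact hvb0)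
        huL
        (by show v (b + (L2 - b)) = (N:ℤ); rw [show b + (L2-b) = L2 by omega]; exact hvL)
        hub
        (fun t ht => by
          show 0 ≤ v (b + t) ∧ v (b + t) ≤ (N:ℤ)
          exact hvb (b+t) (by omega))
      have mapped : PathFrom (SyncP L1 L2 u v) SyncR (0, b) (a', b + b') := by
        have := path'.map (P' := SyncP L1 L2 u v) (R' := SyncR) (fun p : ℕ × ℕ => (p.1, b + p.2))
          (fun p hp => ⟨hp.1, by show b + p.2 ≤ L2; have := hp.2.1; omega, hp.2.2⟩)
          (fun p q hpq => ⟨hpq.1, by show dstep (b + p.2) (b + q.2); have := hpq.2; unfold dstep at *; omega⟩)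
        simpa using this
      refine ⟨a', b + b', hua', ?_⟩
      rw [ha0] at hreachy
      exact hreachy.trans mapped
    by_cases hb0 : b = 0
    · -- recurse on the tail of u
      have ha1 : 1 ≤ a := by omega
      have hua0 : u a = 0 := by rw [huvy, hb0, hv0]
      obtain ⟨a', b', hua', path'⟩ := ih (L1 - a) L2 (by omega) N (fun t => u (a + t)) v
        (fun t ht => by
          show u (a + (t+1)) - u (a + t) = 1 ∨ u (a + (t+1)) - u (a + t) = -1
          rw [show a + (t+1) = (a+t)+1 by omega]
          exact hu (a+t) (by omega))
        hv
        (by show u (a + 0) = 0; rw [Nat.add_zero]; exact hua0)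
        hv0
        (by show u (a + (L1 - a)) = (N:ℤ); rw [show a + (L1-a) = L1 by omega]; exact huL)
        hvL
        (fun t ht => by
          show 0 ≤ u (a + t) ∧ u (a + t) ≤ (N:ℤ)
          exact hub (a+t) (by omega))
        hvb
      have mapped : PathFrom (SyncP L1 L2 u v) SyncR (a, 0) (a + a', b') := by
        have := path'.map (P' := SyncP L1 L2 u v) (R' := SyncR) (fun p : ℕ × ℕ => (a + p.1, p.2))
          (fun p hp => ⟨by show a + p.1 ≤ L1; have := hp.1; omega, hp.2.1, hp.2.2⟩)
          (fun p q hpq => ⟨by show dstep (a + p.1) (a + q.1); have := hpq.1; unfold dstep at *; omega, hpq.2⟩)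
        simpa using this
      refine ⟨a + a', b', hua', ?_⟩
      rw [hb0] at hreachy
      exact hreachy.trans mapped
    -- interior case : even degree, contradiction
    · exfalso
      have haL' : a < L1 := by omega
      have hbL' : b < L2 := by omega
      have ha1 : 1 ≤ a := by omega
      have hb1 : 1 ≤ b := by omega
      obtain ⟨al, hal⟩ : ∃ x : ℤ, x = u (a+1) - u a := ⟨_, rfl⟩
      obtain ⟨be, hbe⟩ : ∃ x : ℤ, x = u (a-1) - u a := ⟨_, rfl⟩
      obtain ⟨ga, hga⟩ : ∃ x : ℤ, x = v (b+1) - v b := ⟨_, rfl⟩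
      obtain ⟨de, hde⟩ : ∃ x : ℤ, x = v (b-1) - v b := ⟨_, rfl⟩
      have halpm : al = 1 ∨ al = -1 := by rw [hal]; exact hu a haL'
      have hbepm : be = 1 ∨ be = -1 := by
        have h := hu (a-1) (by omega)
        rw [show a-1+1 = a by omega] at h
        rcases h with h | h
        · right; rw [hbe]; omega
        · left; rw [hbe]; omega
      have hgapm : ga = 1 ∨ ga = -1 := by rw [hga]; exact hv b hbL'
      have hdepm : de = 1 ∨ de = -1 := by
        have h := hv (b-1) (by omega)
        rw [show b-1+1 = b by omega] at h
        rcases h with h | h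
        · right; rw [hde]; omega
        · left; rw [hde]; omega
      obtain ⟨A1, hA1⟩ : ∃ x : Fin (L1+1), (x : ℕ) = a + 1 := ⟨⟨a+1, by omega⟩, rfl⟩
      obtain ⟨A0, hA0⟩ : ∃ x : Fin (L1+1), (x : ℕ) = a - 1 := ⟨⟨a-1, by omega⟩, rfl⟩
      obtain ⟨B1, hB1⟩ : ∃ x : Fin (L2+1), (x : ℕ) = b + 1 := ⟨⟨b+1, by omega⟩, rfl⟩
      obtain ⟨B0, hB0⟩ : ∃ x : Fin (L2+1), (x : ℕ) = b - 1 := ⟨⟨b-1, by omega⟩, rfl⟩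
      have hreach_cand : ∀ (qa qb : ℕ), dstep a qa → dstep b qb → qa ≤ L1 → qb ≤ L2 →
          u qa = v qb → reach (qa, qb) := fun qa qb h1 h2 h3 h4 h5 =>
        hreachy.trans (PathFrom.single ⟨haL, hbL, huvy⟩ ⟨h3, h4, h5⟩ ⟨h1, h2⟩)
      have hnb : G.neighborFinset y =
          ((if al = ga then {(A1, B1)} else ∅) ∪ (if al = de then {(A1, B0)} else ∅)) ∪
          ((if be = ga then {(A0, B1)} else ∅) ∪ (if be = de then {(A0, B0)} else ∅)) := by
        ext q
        rw [SimpleGraph.mem_neighborFinset, hAdj]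
        simp only [Finset.mem_union]
        constructor
        · rintro ⟨h1, h2, -, h4, -, -⟩
          rw [← ha] at h1
          rw [← hb] at h2
          have hq1 : (q.1 : ℕ) = a + 1 ∨ (q.1 : ℕ) = a - 1 := by unfold dstep at h1; omega
          have hq2 : (q.2 : ℕ) = b + 1 ∨ (q.2 : ℕ) = b - 1 := by unfold dstep at h2; omega
          rcases hq1 with hq1 | hq1 <;> rcases hq2 with hq2 | hq2
          · left; left
            rw [hq1, hq2] at h4
            have hcond : al = ga := by rw [hal, hga]; omega
            rw [if_pos hcond, Finset.mem_singleton]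
            exact Prod.ext (Fin.ext (by rw [hq1, hA1])) (Fin.ext (by rw [hq2, hB1]))
          · left; right
            rw [hq1, hq2] at h4
            have hcond : al = de := by rw [hal, hde]; omega
            rw [if_pos hcond, Finset.mem_singleton]
            exact Prod.ext (Fin.ext (by rw [hq1, hA1])) (Fin.ext (by rw [hq2, hB0]))
          · right; left
            rw [hq1, hq2] at h4
            have hcond : be = ga := by rw [hbe, hga]; omega
            rw [if_pos hcond, Finset.mem_singleton]
            exact Prod.ext (Fin.ext (by rw [hq1, hA0])) (Fin.ext (by rw [hq2, hB1]))
          · right; right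
            rw [hq1, hq2] at h4
            have hcond : be = de := by rw [hbe, hde]; omega
            rw [if_pos hcond, Finset.mem_singleton]
            exact Prod.ext (Fin.ext (by rw [hq1, hA0])) (Fin.ext (by rw [hq2, hB0]))
        · intro hmem
          have hextract : ∀ (c : Prop) (inst : Decidable c) (x : Fin (L1+1) × Fin (L2+1)),
              q ∈ (if c then ({x} : Finset (Fin (L1+1) × Fin (L2+1))) else ∅) → c ∧ q = x := by
            intro c inst x hm
            by_cases hc : c
            · rw [if_pos hc, Finset.mem_singleton] at hm; exact ⟨hc, hm⟩
            · rw [if_neg hc] at hm; exact absurd hm (Finset.notMem_empty q)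
          have hmk : ∀ (qa qb : ℕ), dstep a qa → dstep b qb → qa ≤ L1 → qb ≤ L2 →
              u qa = v qb → (q.1 : ℕ) = qa → (q.2 : ℕ) = qb →
              (dstep (y.1 : ℕ) (q.1 : ℕ) ∧ dstep (y.2 : ℕ) (q.2 : ℕ) ∧
                u (y.1 : ℕ) = v (y.2 : ℕ) ∧ u (q.1 : ℕ) = v (q.2 : ℕ) ∧
                reach ((y.1 : ℕ), (y.2 : ℕ)) ∧ reach ((q.1 : ℕ), (q.2 : ℕ))) := by
            intro qa qb h1 h2 h3 h4 h5 h6 h7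
            rw [← ha, ← hb, h6, h7]
            exact ⟨h1, h2, huvy, h5, hreachy, hreach_cand qa qb h1 h2 h3 h4 h5⟩
          rcases hmem with (h | h) | (h | h)
          · obtain ⟨hc, hq⟩ := hextract _ _ _ h
            refine hmk (a+1) (b+1) (Or.inl rfl) (Or.inl rfl) (by omega) (by omega)
              (by rw [hal, hga] at hc; omega) ?_ ?_ <;> rw [hq]
            · exact hA1
            · exact hB1
          · obtain ⟨hc, hq⟩ := hextract _ _ _ h
            refine hmk (a+1) (b-1) (Or.inl rfl) (Or.inr (by omega)) (by omega) (by omega)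
              (by rw [hal, hde] at hc; omega) ?_ ?_ <;> rw [hq]
            · exact hA1
            · exact hB0
          · obtain ⟨hc, hq⟩ := hextract _ _ _ h
            refine hmk (a-1) (b+1) (Or.inr (by omega)) (Or.inl rfl) (by omega) (by omega)
              (by rw [hbe, hga] at hc; omega) ?_ ?_ <;> rw [hq]
            · exact hA0
            · exact hB1
          · obtain ⟨hc, hq⟩ := hextract _ _ _ h
            refine hmk (a-1) (b-1) (Or.inr (by omega)) (Or.inr (by omega)) (by omega) (by omega)
              (by rw [hbe, hde] at hc; omega) ?_ ?_ <;> rw [hq]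
            · exact hA0
            · exact hB0
      -- now compute the degree and derive evenness
      have hA10 : A1 ≠ A0 := fun h => by rw [Fin.ext_iff, hA1, hA0] at h; omega
      have hB10 : B1 ≠ B0 := fun h => by rw [Fin.ext_iff, hB1, hB0] at h; omega
      have hcard_ite : ∀ (c : Prop) (inst : Decidable c) (x : Fin (L1+1) × Fin (L2+1)),
          (if c then ({x} : Finset (Fin (L1+1) × Fin (L2+1))) else ∅).card
            = if c then 1 else 0 := by
        intro c inst x
        by_cases hc : c
        · rw [if_pos hc, if_pos hc, Finset.card_singleton]
        · rw [if_neg hc, if_neg hc, Finset.card_empty]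
      have hsub_ite : ∀ (c : Prop) (inst : Decidable c) (x : Fin (L1+1) × Fin (L2+1)),
          (if c then ({x} : Finset (Fin (L1+1) × Fin (L2+1))) else ∅) ⊆ {x} := by
        intro c inst x
        by_cases hc : c
        · rw [if_pos hc]
        · rw [if_neg hc]; exact Finset.empty_subset _
      have hdisj : ∀ (c1 c2 : Prop) (i1 : Decidable c1) (i2 : Decidable c2)
          (x1 x2 : Fin (L1+1) × Fin (L2+1)), x1 ≠ x2 →
          Disjoint (if c1 then ({x1} : Finset (Fin (L1+1) × Fin (L2+1))) else ∅)
            (if c2 then ({x2} : Finset (Fin (L1+1) × Fin (L2+1))) else ∅) := by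
        intro c1 c2 i1 i2 x1 x2 hx
        exact Finset.disjoint_of_subset_left (hsub_ite _ _ _)
          (Finset.disjoint_of_subset_right (hsub_ite _ _ _)
            (Finset.disjoint_singleton.2 hx))
      have hne1 : ((A1, B1) : Fin (L1+1) × Fin (L2+1)) ≠ (A1, B0) :=
        fun h => hB10 (congrArg Prod.snd h)
      have hne2 : ((A1, B1) : Fin (L1+1) × Fin (L2+1)) ≠ (A0, B1) :=
        fun h => hA10 (congrArg Prod.fst h)
      have hne3 : ((A1, B1) : Fin (L1+1) × Fin (L2+1)) ≠ (A0, B0) :=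
        fun h => hA10 (congrArg Prod.fst h)
      have hne4 : ((A1, B0) : Fin (L1+1) × Fin (L2+1)) ≠ (A0, B1) :=
        fun h => hA10 (congrArg Prod.fst h)
      have hne5 : ((A1, B0) : Fin (L1+1) × Fin (L2+1)) ≠ (A0, B0) :=
        fun h => hA10 (congrArg Prod.fst h)
      have hne6 : ((A0, B1) : Fin (L1+1) × Fin (L2+1)) ≠ (A0, B0) :=
        fun h => hB10 (congrArg Prod.snd h)
      have hdeg : G.degree y = ((if al = ga then 1 else 0) + (if al = de then 1 else 0)) +
          ((if be = ga then 1 else 0) + (if be = de then 1 else 0)) := by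
        rw [← SimpleGraph.card_neighborFinset_eq_degree, hnb]
        rw [Finset.card_union_of_disjoint, Finset.card_union_of_disjoint,
          Finset.card_union_of_disjoint, hcard_ite, hcard_ite, hcard_ite, hcard_ite]
        · exact hdisj _ _ _ _ _ _ hne6
        · exact hdisj _ _ _ _ _ _ hne1
        · refine Finset.disjoint_union_right.2 ⟨Finset.disjoint_union_left.2 ⟨?_, ?_⟩,
            Finset.disjoint_union_left.2 ⟨?_, ?_⟩⟩
          · exact hdisj _ _ _ _ _ _ hne2
          · exact hdisj _ _ _ _ _ _ hne4
          · exact hdisj _ _ _ _ _ _ hne3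
          · exact hdisj _ _ _ _ _ _ hne5
      have heven : Even (G.degree y) := by
        rw [hdeg]
        rcases halpm with h1 | h1 <;> rcases hbepm with h2 | h2 <;>
          rcases hgapm with h3 | h3 <;> rcases hdepm with h4 | h4 <;>
          rw [h1, h2, h3, h4] <;> decide
      rw [← Nat.not_odd_iff_even] at heven
      exact heven hy_odd

lemma dstep_symm {a b : ℕ} (h : dstep a b) : dstep b a := by unfold dstep at *; omega

lemma dstep_walk {L : ℕ} {w : ℕ → ℤ} (hw : UWalk L w) {a b : ℕ} (h : dstep a b)
    (hb : b ≤ L) (ha : a ≤ L) : w b - w a = 1 ∨ w b - w a = -1 := by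
  rcases h with h | h
  · subst h; exact hw a (by omega)
  · subst h; rcases hw b (by omega) with h' | h' <;> omega

/-- Synchronization of finitely many unit walks from `0` to `N`. -/
lemma multisync {ι : Type*} [DecidableEq ι] (N : ℕ) (S : Finset ι) :
    ∀ (L : ι → ℕ) (w : ι → ℕ → ℤ),
    (∀ j ∈ S, UWalk (L j) (w j)) → (∀ j ∈ S, w j 0 = 0) → (∀ j ∈ S, w j (L j) = N) →
    (∀ j ∈ S, ∀ t ≤ L j, 0 ≤ w j t ∧ w j t ≤ N) →
    ∃ (K : ℕ) (h : ℕ → ℤ) (pos : ι → ℕ → ℕ),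
      UWalk K h ∧ h 0 = 0 ∧ h K = N ∧ (∀ t ≤ K, 0 ≤ h t ∧ h t ≤ N) ∧
      (∀ j ∈ S, pos j 0 = 0) ∧ (∀ j ∈ S, ∀ t ≤ K, pos j t ≤ L j ∧ w j (pos j t) = h t) ∧
      (∀ j ∈ S, ∀ t < K, dstep (pos j t) (pos j (t+1))) := by
  induction S using Finset.induction with
  | empty =>
    intro L w _ _ _ _
    refine ⟨N, fun t => ((min t N : ℕ) : ℤ), fun _ _ => 0, ?_, ?_, ?_, ?_, ?_, ?_, ?_⟩
    · intro t ht
      left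
      show ((min (t+1) N : ℕ) : ℤ) - ((min t N : ℕ) : ℤ) = 1
      have h1 : min (t+1) N = t + 1 := by omega
      have h2 : min t N = t := by omega
      rw [h1, h2]; push_cast; ring
    · simp
    · simp
    · intro t ht
      refine ⟨by positivity, ?_⟩
      show ((min t N : ℕ) : ℤ) ≤ (N : ℤ)
      exact_mod_cast min_le_right t N
    · intro j hj; exact absurd hj (Finset.notMem_empty j)
    · intro j hj; exact absurd hj (Finset.notMem_empty j)
    · intro j hj; exact absurd hj (Finset.notMem_empty j)
  | @insert j S' hjS ih =>
    intro L w hw h0 hL hb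
    obtain ⟨K, h, pos, hKw, hK0, hKN, hKb, hp0, hpi, hps⟩ := ih L w
      (fun i hi => hw i (Finset.mem_insert_of_mem hi))
      (fun i hi => h0 i (Finset.mem_insert_of_mem hi))
      (fun i hi => hL i (Finset.mem_insert_of_mem hi))
      (fun i hi => hb i (Finset.mem_insert_of_mem hi))
    have hjmem : j ∈ insert j S' := Finset.mem_insert_self j S'
    obtain ⟨A, B, hA, Tx⟩ := dmcp (K + L j) K (L j) le_rfl N h (w j)
      hKw (hw j hjmem) hK0 (h0 j hjmem) hKN (hL j hjmem) hKb (hb j hjmem)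
    obtain ⟨T, x, hP, hR, hx0, hxT⟩ := Tx
    refine ⟨T, fun t => h ((x t).1),
      fun i t => if i = j then (x t).2 else pos i ((x t).1), ?_, ?_, ?_, ?_, ?_, ?_, ?_⟩
    · intro t ht
      exact dstep_walk hKw (hR t ht).1 (hP (t+1) (by omega)).1 (hP t (by omega)).1
    · show h ((x 0).1) = 0
      rw [hx0]; exact hK0
    · show h ((x T).1) = (N:ℤ)
      rw [hxT]; exact hA
    · intro t ht
      exact hKb _ (hP t ht).1
    · intro i hi
      show (if i = j then (x 0).2 else pos i ((x 0).1)) = 0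
      by_cases hij : i = j
      · subst hij; rw [if_pos rfl, hx0]
      · rw [if_neg hij, hx0]
        exact hp0 i (Finset.mem_of_mem_insert_of_ne hi hij)
    · intro i hi t ht
      show (if i = j then (x t).2 else pos i ((x t).1)) ≤ L i ∧
        w i (if i = j then (x t).2 else pos i ((x t).1)) = h ((x t).1)
      by_cases hij : i = j
      · subst hij; rw [if_pos rfl]
        exact ⟨(hP t ht).2.1, ((hP t ht).2.2).symm⟩
      · rw [if_neg hij]
        exact hpi i (Finset.mem_of_mem_insert_of_ne hi hij) _ (hP t ht).1
    · intro i hi t ht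
      show dstep (if i = j then (x t).2 else pos i ((x t).1))
        (if i = j then (x (t+1)).2 else pos i ((x (t+1)).1))
      by_cases hij : i = j
      · subst hij; rw [if_pos rfl, if_pos rfl]
        exact (hR t ht).2
      · rw [if_neg hij, if_neg hij]
        have hmem := Finset.mem_of_mem_insert_of_ne hi hij
        rcases (hR t ht).1 with hstep | hstep
        · rw [hstep]
          exact hps i hmem ((x t).1) (by have := (hP (t+1) (by omega)).1; omega)
        · rw [hstep]
          exact dstep_symm (hps i hmem ((x (t+1)).1) (by have := (hP t (by omega)).1; omega))


def pstep (q r : ℤ × ℤ) : Prop :=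
  ((q.1 - r.1 = 1 ∨ r.1 - q.1 = 1) ∧ q.2 = r.2) ∨
    (q.1 = r.1 ∧ (q.2 - r.2 = 1 ∨ r.2 - q.2 = 1))

lemma seg_extract (Q : ℤ × ℤ → Prop) (T : ℕ) (p : ℕ → ℤ × ℤ)
    (hQ : ∀ t ≤ T, Q (p t)) (hstep : ∀ t < T, pstep (p t) (p (t+1))) :
    ∃ (L : ℕ) (w : ℕ → ℤ) (len : ℕ → ℕ) (z : ℕ → ℕ → ℤ),
      (∀ i < L, w (i+1) - w i = 1 ∨ w (i+1) - w i = -1) ∧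
      w 0 = (p 0).1 ∧ w L = (p T).1 ∧
      z 0 0 = (p 0).2 ∧ z L (len L) = (p T).2 ∧
      (∀ i ≤ L, ∀ r ≤ len i, Q (w i, z i r)) ∧
      (∀ i ≤ L, ∀ r < len i, z i (r+1) - z i r = 1 ∨ z i (r+1) - z i r = -1) ∧
      (∀ i < L, z (i+1) 0 = z i (len i)) := by
  induction T with
  | zero =>
    obtain ⟨w', hw'⟩ : ∃ f : ℕ → ℤ, ∀ i, f i = (p 0).1 := ⟨_, fun _ => rfl⟩
    obtain ⟨len', hlen'⟩ : ∃ f : ℕ → ℕ, ∀ i, f i = 0 := ⟨_, fun _ => rfl⟩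
    obtain ⟨z', hz'⟩ : ∃ f : ℕ → ℕ → ℤ, ∀ i r, f i r = (p 0).2 := ⟨_, fun _ _ => rfl⟩
    refine ⟨0, w', len', z', ?_, hw' 0, hw' 0, hz' 0 0, hz' 0 _, ?_, ?_, ?_⟩
    · intro i hi; omega
    · intro i hi r hr
      rw [hw' i, hz' i r]
      exact hQ 0 le_rfl
    · intro i hi r hr; rw [hlen' i] at hr; omega
    · intro i hi; omega
  | succ T ih =>
    obtain ⟨L, w, len, z, hw, hw0, hwL, hz00, hanchor, hQz, hzstep, hlink⟩ :=
      ih (fun t ht => hQ t (by omega)) (fun t ht => hstep t (by omega))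
    have hpair : ∀ t, p t = ((p t).1, (p t).2) := fun t => rfl
    rcases hstep T (by omega) with hvert | hhor
    · -- vertical step
      obtain ⟨w', hw'⟩ : ∃ f : ℕ → ℤ, ∀ i, f i = if i = L+1 then (p (T+1)).1 else w i :=
        ⟨_, fun _ => rfl⟩
      obtain ⟨len', hlen'⟩ : ∃ f : ℕ → ℕ, ∀ i, f i = if i = L+1 then 0 else len i :=
        ⟨_, fun _ => rfl⟩
      obtain ⟨z', hz'⟩ : ∃ f : ℕ → ℕ → ℤ, ∀ i r, f i r = if i = L+1 then (p T).2 else z i r :=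
        ⟨_, fun _ _ => rfl⟩
      refine ⟨L+1, w', len', z', ?_, ?_, ?_, ?_, ?_, ?_, ?_, ?_⟩
      · intro i hi
        rw [hw' (i+1), hw' i]
        by_cases hiL : i = L
        · subst hiL
          rw [if_pos rfl, if_neg (by omega), hwL]
          rcases hvert.1 with h | h
          · right; omega
          · left; omega
        · rw [if_neg (by omega), if_neg (by omega)]
          exact hw i (by omega)
      · rw [hw' 0, if_neg (by omega)]; exact hw0
      · rw [hw' (L+1), if_pos rfl]
      · rw [hz' 0 0, if_neg (by omega)]; exact hz00
      · rw [hz' (L+1) _, if_pos rfl]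
        have := hvert.2
        omega
      · intro i hi r hr
        rw [hw' i, hz' i r]
        by_cases hiL : i = L+1
        · subst hiL
          rw [if_pos rfl, if_pos rfl]
          have hq : Q ((p (T+1)).1, (p (T+1)).2) := by rw [← hpair (T+1)]; exact hQ (T+1) le_rfl
          rwa [← hvert.2] at hq
        · rw [if_neg hiL, if_neg hiL]
          rw [hlen' i, if_neg hiL] at hr
          exact hQz i (by omega) r hr
      · intro i hi r hr
        rw [hlen' i] at hr
        rw [hz' i (r+1), hz' i r]
        by_cases hiL : i = L+1
        · rw [if_pos hiL] at hr; omega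
        · rw [if_neg hiL] at hr ⊢
          rw [if_neg hiL]
          exact hzstep i (by omega) r hr
      · intro i hi
        rw [hz' (i+1) 0, hlen' i, hz' i _]
        by_cases hiL : i = L
        · subst hiL
          rw [if_pos rfl, if_neg (by omega), if_neg (by omega)]
          exact hanchor.symm
        · rw [if_neg (by omega), if_neg (by omega), if_neg (by omega)]
          exact hlink i (by omega)
    · -- horizontal step
      obtain ⟨len', hlen'⟩ : ∃ f : ℕ → ℕ, ∀ i, f i = if i = L then len L + 1 else len i :=
        ⟨_, fun _ => rfl⟩
      obtain ⟨z', hz'⟩ : ∃ f : ℕ → ℕ → ℤ, ∀ i r,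
          f i r = if i = L ∧ r = len L + 1 then (p (T+1)).2 else z i r := ⟨_, fun _ _ => rfl⟩
      refine ⟨L, w, len', z', hw, hw0, by rw [hwL]; exact hhor.1, ?_, ?_, ?_, ?_, ?_⟩
      · rw [hz' 0 0, if_neg (by rintro ⟨h1, h2⟩; omega)]; exact hz00
      · rw [hlen' L, if_pos rfl, hz' L _, if_pos ⟨rfl, rfl⟩]
      · intro i hi r hr
        rw [hlen' i] at hr
        rw [hz' i r]
        by_cases hiL : i = L
        · subst hiL
          rw [if_pos rfl] at hr
          by_cases hrl : r = len i + 1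
          · rw [if_pos ⟨rfl, hrl⟩]
            have hq : Q ((p (T+1)).1, (p (T+1)).2) := by rw [← hpair (T+1)]; exact hQ (T+1) le_rfl
            rw [hwL, hhor.1]
            exact hq
          · rw [if_neg (by rintro ⟨h1, h2⟩; omega)]
            exact hQz _ le_rfl r (by omega)
        · rw [if_neg (by rintro ⟨h1, h2⟩; omega)]
          rw [if_neg hiL] at hr
          exact hQz i hi r hr
      · intro i hi r hr
        rw [hlen' i] at hr
        rw [hz' i (r+1), hz' i r]
        by_cases hiL : i = L
        · subst hiL
          rw [if_pos rfl] at hr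
          by_cases hrl : r = len i
          · subst hrl
            rw [if_pos ⟨rfl, rfl⟩, if_neg (by rintro ⟨h1, h2⟩; omega)]
            have h2 := hhor.2
            omega
          · rw [if_neg (by rintro ⟨h1, h2⟩; omega), if_neg (by rintro ⟨h1, h2⟩; omega)]
            exact hzstep _ le_rfl r (by omega)
        · rw [if_neg (by rintro ⟨h1, h2⟩; omega), if_neg (by rintro ⟨h1, h2⟩; omega)]
          rw [if_neg hiL] at hr
          exact hzstep i hi r hr
      · intro i hi
        rw [hz' (i+1) 0, hlen' i, hz' i _]
        rw [if_neg (by rintro ⟨h1, h2⟩; omega), if_neg (by omega),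
          if_neg (by rintro ⟨h1, h2⟩; omega)]
        exact hlink i hi


lemma walk_grid {α ι : Type*} [DecidableEq ι] (S : Finset ι) (bound : ι → ℕ)
    (V : (ι → ℕ) → α) (P : α → Prop) (R : α → α → Prop)
    (hVext : ∀ r1 r2 : ι → ℕ, (∀ j ∈ S, r1 j = r2 j) → V r1 = V r2)
    (hP : ∀ r : ι → ℕ, (∀ j ∈ S, r j ≤ bound j) → P (V r))
    (hR : ∀ (r : ι → ℕ) (j : ι), j ∈ S → ∀ k, dstep (r j) k →
      (∀ j' ∈ S, r j' ≤ bound j') → k ≤ bound j → R (V r) (V (Function.update r j k))) :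
    ∀ (fuel : ℕ) (r1 r2 : ι → ℕ),
      (∑ j ∈ S, (max (r1 j) (r2 j) - min (r1 j) (r2 j))) ≤ fuel →
      (∀ j ∈ S, r1 j ≤ bound j) → (∀ j ∈ S, r2 j ≤ bound j) →
      PathFrom P R (V r1) (V r2) := by
  intro fuel
  induction fuel with
  | zero =>
    intro r1 r2 hsum hb1 hb2
    have heq : ∀ j ∈ S, r1 j = r2 j := by
      intro j hj
      have h1 : (max (r1 j) (r2 j) - min (r1 j) (r2 j)) = 0 := by
        have := Finset.sum_eq_zero_iff.1 (Nat.le_zero.1 hsum) j hj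
        omega
      omega
    rw [hVext r1 r2 heq]
    exact PathFrom.refl (hP r2 hb2)
  | succ fuel ih =>
    intro r1 r2 hsum hb1 hb2
    by_cases hdone : ∀ j ∈ S, r1 j = r2 j
    · rw [hVext r1 r2 hdone]
      exact PathFrom.refl (hP r2 hb2)
    · push_neg at hdone
      obtain ⟨j, hj, hne⟩ := hdone
      set k := if r1 j < r2 j then r1 j + 1 else r1 j - 1 with hk
      have hdk : dstep (r1 j) k := by rw [hk]; unfold dstep; split_ifs <;> omega
      have hkb : k ≤ bound j := by
        have := hb1 j hj
        have := hb2 j hj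
        rw [hk]; split_ifs <;> omega
      set r1' := Function.update r1 j k with hr1'
      have hr1'j : ∀ j', r1' j' = if j' = j then k else r1 j' := by
        intro j'
        rw [hr1', Function.update]
        split_ifs with h
        · subst h; simp
        · simp [h]
      have hb1' : ∀ j' ∈ S, r1' j' ≤ bound j' := by
        intro j' hj'
        rw [hr1'j j']
        split_ifs with h
        · subst h; exact hkb
        · exact hb1 j' hj'
      have hsum' : (∑ j' ∈ S, (max (r1' j') (r2 j') - min (r1' j') (r2 j'))) ≤ fuel := by
        have hterm : ∀ j' ∈ S, j' ≠ j →
            (max (r1' j') (r2 j') - min (r1' j') (r2 j')) =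
            (max (r1 j') (r2 j') - min (r1 j') (r2 j')) := by
          intro j' _ hjj
          rw [hr1'j j', if_neg hjj]
        have hj' : (max (r1' j) (r2 j) - min (r1' j) (r2 j)) + 1 =
            (max (r1 j) (r2 j) - min (r1 j) (r2 j)) := by
          rw [hr1'j j, if_pos rfl, hk]
          split_ifs <;> omega
        rw [← Finset.add_sum_erase _ _ hj] at hsum ⊢
        rw [Finset.sum_congr rfl (fun j' hmem => hterm j' (Finset.mem_of_mem_erase hmem)
          (Finset.ne_of_mem_erase hmem))]
        omega
      exact (PathFrom.single (hP r1 hb1) (hP r1' hb1')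
        (hR r1 j hj k hdk hb1 hkb)).trans (ih r1' r2 hsum' hb1' hb2)


end Aux


section Incl

variable {n : ℕ}

lemma proj_idem (J : Finset (Fin n)) (v : Fin n → ℤ) : proj J (proj J v) = proj J v := by
  funext i
  unfold proj
  by_cases h : i ∈ J <;> simp [h]

lemma mem_pair_self (e0 j : Fin n) : e0 ∈ ({e0, j} : Finset (Fin n)) :=
  Finset.mem_insert_self e0 {j}

lemma mem_pair_right (e0 j : Fin n) : j ∈ ({e0, j} : Finset (Fin n)) :=
  Finset.mem_insert_of_mem (Finset.mem_singleton_self j)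

lemma box_to_plane (e0 j : Fin n) (hj : j ≠ e0) (m : Fin n → ℕ)
    (good goodp : (Fin n → ℤ) → Prop)
    (hgp : ∀ v, good v → goodp (proj {e0, j} v))
    (hb : btBox e0 m good) : btPlane e0 j m goodp := by
  obtain ⟨T, x, hP, hR, h0, hT⟩ := hb
  have lazy : PathFrom
      (fun v => (0 ≤ v e0 ∧ v e0 ≤ (m e0 : ℤ)) ∧ (0 ≤ v j ∧ v j ≤ (m j : ℤ)) ∧
        (∀ i, i ≠ e0 → i ≠ j → v i = 0) ∧ goodp v)
      (fun u v => latAdj u v ∨ u = v)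
      (proj {e0, j} (x 0)) (proj {e0, j} (x T)) := by
    refine ⟨T, fun t => proj {e0, j} (x t), ?_, ?_, rfl, rfl⟩
    · intro t ht
      obtain ⟨hbd, hgd⟩ := hP t ht
      refine ⟨?_, ?_, ?_, hgp _ hgd⟩
      · show 0 ≤ (if e0 ∈ ({e0, j} : Finset (Fin n)) then x t e0 else 0) ∧
          (if e0 ∈ ({e0, j} : Finset (Fin n)) then x t e0 else 0) ≤ (m e0 : ℤ)
        rw [if_pos (mem_pair_self e0 j)]
        exact hbd e0
      · show 0 ≤ (if j ∈ ({e0, j} : Finset (Fin n)) then x t j else 0) ∧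
          (if j ∈ ({e0, j} : Finset (Fin n)) then x t j else 0) ≤ (m j : ℤ)
        rw [if_pos (mem_pair_right e0 j)]
        exact hbd j
      · intro i hi1 hi2
        show (if i ∈ ({e0, j} : Finset (Fin n)) then x t i else 0) = 0
        rw [if_neg]
        intro hmem
        rcases Finset.mem_insert.1 hmem with h | h
        · exact hi1 h
        · exact hi2 (Finset.mem_singleton.1 h)
    · intro t ht
      exact latAdj_proj {e0, j} (hR t ht)
  obtain ⟨T', y, hP', hR', h0', hT'⟩ := lazy.of_lazy
  refine ⟨T', y, hP', hR', ?_, ?_⟩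
  · rw [h0']
    show (if e0 ∈ ({e0, j} : Finset (Fin n)) then x 0 e0 else 0) = 0
    rw [if_pos (mem_pair_self e0 j)]
    exact h0
  · rw [hT']
    show (if e0 ∈ ({e0, j} : Finset (Fin n)) then x T e0 else 0) = (m e0 : ℤ)
    rw [if_pos (mem_pair_self e0 j)]
    exact hT

end Incl


section Assembly

variable {n : ℕ}

lemma planes_to_box (e0 : Fin n) (m : Fin n → ℕ) (g : Fin n → ℤ → ℤ → Prop)
    (h : ∀ j, j ≠ e0 → btPlane e0 j m (fun v => g j (v e0) (v j))) :
    btBox e0 m (fun v => ∀ j, j ≠ e0 → g j (v e0) (v j)) := by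
  classical
  set S : Finset (Fin n) := Finset.univ.erase e0 with hS
  have hSmem : ∀ j, j ∈ S ↔ j ≠ e0 := by
    intro j; rw [hS, Finset.mem_erase]; simp
  have data : ∀ j : Fin n, ∃ (L : ℕ) (w : ℕ → ℤ) (len : ℕ → ℕ) (z : ℕ → ℕ → ℤ),
      j ≠ e0 →
      (UWalk L w ∧ w 0 = 0 ∧ w L = ((m e0 : ℕ) : ℤ) ∧
       (∀ i ≤ L, ∀ r ≤ len i, (0 ≤ w i ∧ w i ≤ (m e0 : ℤ)) ∧
          (0 ≤ z i r ∧ z i r ≤ (m j : ℤ)) ∧ g j (w i) (z i r)) ∧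
       (∀ i ≤ L, ∀ r < len i, z i (r+1) - z i r = 1 ∨ z i (r+1) - z i r = -1) ∧
       (∀ i < L, z (i+1) 0 = z i (len i))) := by
    intro j
    by_cases hj : j ≠ e0
    · obtain ⟨T, x, hP, hR, h0, hT⟩ := h j hj
      obtain ⟨L, w, len, z, hw, hw0, hwL, _, _, hQz, hzstep, hlink⟩ :=
        seg_extract
          (fun q => (0 ≤ q.1 ∧ q.1 ≤ (m e0 : ℤ)) ∧ (0 ≤ q.2 ∧ q.2 ≤ (m j : ℤ)) ∧ g j q.1 q.2)
          T (fun t => (x t e0, x t j))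
          (fun t ht => by
            obtain ⟨hb1, hb2, _, hg⟩ := hP t ht
            exact ⟨hb1, hb2, hg⟩)
          (fun t ht => by
            show pstep (x t e0, x t j) (x (t+1) e0, x (t+1) j)
            obtain ⟨i0, habs, hrest⟩ := latAdj_iff.1 (hR t ht)
            have habs' : x t i0 - x (t+1) i0 = 1 ∨ x t i0 - x (t+1) i0 = -1 := by
              rcases (abs_eq (by norm_num : (0:ℤ) ≤ 1)).1 habs with hh | hh
              · exact Or.inl hh
              · exact Or.inr hh
            by_cases hie : i0 = e0
            · subst hie
              refine Or.inl ⟨?_, ?_⟩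
              · show x t i0 - x (t+1) i0 = 1 ∨ x (t+1) i0 - x t i0 = 1
                omega
              · show x t j = x (t+1) j
                exact hrest j hj
            · by_cases hij : i0 = j
              · subst hij
                refine Or.inr ⟨?_, ?_⟩
                · show x t e0 = x (t+1) e0
                  exact hrest e0 (fun he => hie he.symm) |>.symm ▸ hrest e0 (fun he => hie he.symm)
                · show x t i0 - x (t+1) i0 = 1 ∨ x (t+1) i0 - x t i0 = 1
                  omega
              · exfalso
                have hz1 := (hP t (by omega)).2.2.1 i0 hie hij
                have hz2 := (hP (t+1) (by omega)).2.2.1 i0 hie hij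
                rw [hz1, hz2] at habs'
                omega)
      refine ⟨L, w, len, z, fun _ => ⟨hw, ?_, ?_, hQz, hzstep, hlink⟩⟩
      · rw [hw0]; exact h0
      · rw [hwL]; exact hT
    · exact ⟨0, fun _ => 0, fun _ => 0, fun _ _ => 0, fun hjj => absurd hjj hj⟩
  choose L w len z hdata using data
  obtain ⟨K, hgt, pos, hKw, hK0, hKN, hKb, hp0, hpi, hps⟩ :=
    multisync (m e0) S L w
      (fun j hj => (hdata j ((hSmem j).1 hj)).1)
      (fun j hj => (hdata j ((hSmem j).1 hj)).2.1)
      (fun j hj => (hdata j ((hSmem j).1 hj)).2.2.1)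
      (fun j hj t ht => ((hdata j ((hSmem j).1 hj)).2.2.2.1 t ht 0 (Nat.zero_le _)).1)
  obtain ⟨V, hV⟩ : ∃ V : ℕ → (Fin n → ℕ) → (Fin n → ℤ),
      ∀ t r i, V t r i = if i = e0 then hgt t else z i (pos i t) (r i) := ⟨_, fun _ _ _ => rfl⟩
  set boxP : (Fin n → ℤ) → Prop :=
    fun v => (∀ i, 0 ≤ v i ∧ v i ≤ (m i : ℤ)) ∧ ∀ j, j ≠ e0 → g j (v e0) (v j) with hboxP
  have hPV : ∀ t, t ≤ K → ∀ r : Fin n → ℕ, (∀ j ∈ S, r j ≤ len j (pos j t)) →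
      boxP (V t r) := by
    intro t ht r hr
    constructor
    · intro i
      rw [hV t r i]
      by_cases hie : i = e0
      · subst hie
        rw [if_pos rfl]
        exact hKb t ht
      · rw [if_neg hie]
        have hQ := (hdata i hie).2.2.2.1 (pos i t) (hpi i ((hSmem i).2 hie) t ht).1
          (r i) (hr i ((hSmem i).2 hie))
        exact hQ.2.1
    · intro j hj
      rw [hV t r e0, hV t r j, if_pos rfl, if_neg hj]
      have hQ := (hdata j hj).2.2.2.1 (pos j t) (hpi j ((hSmem j).2 hj) t ht).1
        (r j) (hr j ((hSmem j).2 hj))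
      have hwp := (hpi j ((hSmem j).2 hj) t ht).2
      rw [← hwp]
      exact hQ.2.2
  have hVext : ∀ t (r1 r2 : Fin n → ℕ), (∀ j ∈ S, r1 j = r2 j) → V t r1 = V t r2 := by
    intro t r1 r2 hagree
    funext i
    rw [hV, hV]
    by_cases hie : i = e0
    · rw [if_pos hie, if_pos hie]
    · rw [if_neg hie, if_neg hie, hagree i ((hSmem i).2 hie)]
  have hlatV : ∀ t, t ≤ K → ∀ (r : Fin n → ℕ) (j : Fin n), j ∈ S → ∀ k, dstep (r j) k →
      (∀ j' ∈ S, r j' ≤ len j' (pos j' t)) → k ≤ len j (pos j t) →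
      latAdj (V t r) (V t (Function.update r j k)) := by
    intro t ht r j hj k hk hrb hkb
    have hje : j ≠ e0 := (hSmem j).1 hj
    refine latAdj_iff.2 ⟨j, ?_, ?_⟩
    · rw [hV, hV, if_neg hje, if_neg hje, Function.update_self]
      have hzs := (hdata j hje).2.2.2.2.1 (pos j t) (hpi j hj t ht).1
      rcases hk with hk | hk
      · have hd : z j (pos j t) (r j) - z j (pos j t) k = 1 ∨
            z j (pos j t) (r j) - z j (pos j t) k = -1 := by
          rw [hk]
          rcases hzs (r j) (by omega) with hh | hh <;> omega
        rcases hd with hd | hd <;> rw [hd] <;> decide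
      · have hd : z j (pos j t) (r j) - z j (pos j t) k = 1 ∨
            z j (pos j t) (r j) - z j (pos j t) k = -1 := by
          have hrj := hrb j hj
          rcases hzs k (by omega) with hh | hh <;> rw [← hk] at hh <;> omega
        rcases hd with hd | hd <;> rw [hd] <;> decide
    · intro i hi
      rw [hV, hV]
      by_cases hie : i = e0
      · rw [if_pos hie, if_pos hie]
      · rw [if_neg hie, if_neg hie, Function.update_of_ne hi]
  have hreach : ∀ t, t ≤ K →
      PathFrom boxP latAdj (V 0 (fun _ => 0)) (V t (fun _ => 0)) := by
    intro t
    induction t with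
    | zero =>
      intro _
      exact PathFrom.refl (hPV 0 (Nat.zero_le _) _ (fun j _ => Nat.zero_le _))
    | succ t iht =>
      intro ht
      have hbase := iht (by omega)
      obtain ⟨rho, hrho⟩ : ∃ f : Fin n → ℕ, ∀ j, f j =
          if pos j (t+1) = pos j t + 1 then len j (pos j t) else 0 := ⟨_, fun _ => rfl⟩
      obtain ⟨r', hr'⟩ : ∃ f : Fin n → ℕ, ∀ j, f j =
          if pos j (t+1) = pos j t + 1 then 0 else len j (pos j (t+1)) := ⟨_, fun _ => rfl⟩
      have hrhob : ∀ j ∈ S, rho j ≤ len j (pos j t) := by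
        intro j hj; rw [hrho]; split_ifs <;> omega
      have hr'b : ∀ j ∈ S, r' j ≤ len j (pos j (t+1)) := by
        intro j hj; rw [hr']; split_ifs <;> omega
      have path1 : PathFrom boxP latAdj (V t (fun _ => 0)) (V t rho) :=
        walk_grid S (fun j => len j (pos j t)) (V t) boxP latAdj
          (hVext t) (hPV t (by omega)) (hlatV t (by omega)) _ _ _ le_rfl
          (fun j _ => Nat.zero_le _) hrhob
      have path2 : PathFrom boxP latAdj (V (t+1) r') (V (t+1) (fun _ => 0)) :=
        walk_grid S (fun j => len j (pos j (t+1))) (V (t+1)) boxP latAdj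
          (hVext (t+1)) (hPV (t+1) ht) (hlatV (t+1) ht) _ _ _ le_rfl
          hr'b (fun j _ => Nat.zero_le _)
      have hstep : latAdj (V t rho) (V (t+1) r') := by
        refine latAdj_iff.2 ⟨e0, ?_, ?_⟩
        · rw [hV, hV, if_pos rfl, if_pos rfl]
          rcases hKw t (by omega) with hh | hh
          · rw [show hgt t - hgt (t+1) = -1 by omega]; decide
          · rw [show hgt t - hgt (t+1) = 1 by omega]; decide
        · intro i hi
          rw [hV, hV]
          by_cases hie : i = e0
          · exact absurd hie hi
          · rw [if_neg hie, if_neg hie, hrho i, hr' i]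
            have himem : i ∈ S := (hSmem i).2 hie
            have hpt1 := (hpi i himem (t+1) ht).1
            have hpt0 := (hpi i himem t (by omega)).1
            rcases hps i himem t (by omega) with hc | hc
            · rw [if_pos hc, if_pos hc, hc]
              exact ((hdata i hie).2.2.2.2.2 (pos i t) (by omega)).symm
            · have hnc : ¬ (pos i (t+1) = pos i t + 1) := by omega
              rw [if_neg hnc, if_neg hnc, hc]
              exact (hdata i hie).2.2.2.2.2 (pos i (t+1)) (by omega)
      exact ((hbase.trans path1).trans
        (PathFrom.single (hPV t (by omega) rho hrhob) (hPV (t+1) ht r' hr'b) hstep)).trans path2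
  obtain ⟨T, xx, hPx, hRx, hx0, hxT⟩ := hreach K le_rfl
  refine ⟨T, xx, fun t ht => hPx t ht, hRx, ?_, ?_⟩
  · rw [hx0, hV, if_pos rfl]; exact hK0
  · rw [hxT, hV, if_pos rfl]; exact hKN

end Assembly


section Events

variable {n : ℕ}

def ptv (e0 j : Fin n) (hz z : ℤ) : Fin n → ℤ :=
  fun i => if i = e0 then hz else if i = j then z else 0

lemma proj_pair_eq (e0 j : Fin n) (v : Fin n → ℤ) :
    proj {e0, j} v = ptv e0 j (v e0) (v j) := by
  funext i
  unfold proj ptv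
  by_cases h1 : i = e0
  · subst h1
    rw [if_pos (mem_pair_self i j), if_pos rfl]
  · by_cases h2 : i = j
    · subst h2
      rw [if_pos (mem_pair_right e0 i), if_neg h1, if_pos rfl]
    · rw [if_neg, if_neg h1, if_neg h2]
      intro hmem
      rcases Finset.mem_insert.1 hmem with hh | hh
      · exact h1 hh
      · exact h2 (Finset.mem_singleton.1 hh)

/-- the side condition of a bottom-to-top plane crossing, given finitely many points -/
def PlaneCond (e0 j : Fin n) (m : Fin n → ℕ) (T : ℕ) (X : Fin (T+1) → (Fin n → ℤ)) : Prop :=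
  (∀ t : Fin (T+1), (0 ≤ X t e0 ∧ X t e0 ≤ (m e0 : ℤ)) ∧ (0 ≤ X t j ∧ X t j ≤ (m j : ℤ)) ∧
    (∀ i, i ≠ e0 → i ≠ j → X t i = 0)) ∧
  (∀ (t : ℕ) (_ : t < T), latAdj (X ⟨t, by omega⟩) (X ⟨t+1, by omega⟩)) ∧
  X ⟨0, by omega⟩ e0 = 0 ∧ X ⟨T, by omega⟩ e0 = (m e0 : ℤ)

lemma btPlane_event_eq {Ω : Type} (e0 j : Fin n) (m : Fin n → ℕ)
    (G : (Fin n → ℤ) → Ω → Bool) :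
    {a | btPlane e0 j m (fun v => G v a = true)} =
      ⋃ (T : ℕ), ⋃ (X : Fin (T+1) → (Fin n → ℤ)), ⋃ (_ : PlaneCond e0 j m T X),
        ⋂ (t : Fin (T+1)), {a | G (X t) a = true} := by
  ext a
  simp only [Set.mem_setOf_eq, Set.mem_iUnion, Set.mem_iInter]
  constructor
  · rintro ⟨T, x, hP, hR, h0, hT⟩
    refine ⟨T, fun t => x t, ⟨?_, ?_, ?_, ?_⟩, ?_⟩
    · intro t
      obtain ⟨hb1, hb2, hz, _⟩ := hP t (by omega)
      exact ⟨hb1, hb2, hz⟩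
    · intro t ht
      exact hR t ht
    · exact h0
    · exact hT
    · intro t
      exact (hP t (by omega)).2.2.2
  · rintro ⟨T, X, ⟨hC1, hC2, hC3, hC4⟩, hG⟩
    refine ⟨T, fun t => X ⟨min t T, by omega⟩, ?_, ?_, ?_, ?_⟩
    · intro t ht
      have hmin : min t T = t := by omega
      refine ⟨(hC1 _).1, (hC1 _).2.1, (hC1 _).2.2, hG _⟩
    · intro t ht
      have h1 : min t T = t := by omega
      have h2 : min (t+1) T = t + 1 := by omega
      have := hC2 t ht
      simp only [h1, h2]
      convert this using 2 <;> omega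
    · have : min 0 T = 0 := by omega
      simp only [this]
      exact hC3
    · have : min T T = T := by omega
      simp only [this]
      exact hC4

end Events

/-- the probability that the field `ξ(x) = ∏_{j≥2} ω_{I_j}(π_{I_j}(x))` has a
bottom-to-top crossing of `B` equals the product over `j` of the probabilities that
`ω_{I_j}` crosses the projected rectangle `π_{I_j}(B)` from bottom to top. -/
theorem crossing_probability_product (n : ℕ) (hn : 3 ≤ n)
    (e0 : Fin n) (he0 : (e0 : ℕ) = 0)
    (p : Finset (Fin n) → ℝ) (Ω : Type) [MeasurableSpace Ω] (μ : Measure Ω)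
    (F : Finset (Fin n) → (Fin n → ℤ) → Ω → Bool)
    (hperc : IsHyperplanePercolation n 2 p μ F)
    (N : ℕ) (m : Fin n → ℕ) (hm : m e0 = N) :
    μ {a | btBox e0 m
        (fun v => ∀ j, j ≠ e0 → F {e0, j} (proj {e0, j} v) a = true)} =
      ∏ j ∈ Finset.univ.erase e0,
        μ {a | btPlane e0 j m (fun v => F {e0, j} (proj {e0, j} v) a = true)} := by
  classical
  obtain ⟨hprob, hmeasF, hindep, hber⟩ := hperc
  haveI := hprob
  -- event equality : a box crossing happens iff every plane crossing happens
  have hset : {a | btBox e0 m (fun v => ∀ j, j ≠ e0 → F {e0, j} (proj {e0, j} v) a = true)} =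
      ⋂ j ∈ Finset.univ.erase e0,
        {a | btPlane e0 j m (fun v => F {e0, j} (proj {e0, j} v) a = true)} := by
    ext a
    simp only [Set.mem_setOf_eq, Set.mem_iInter]
    constructor
    · intro hbox j hj
      have hj' : j ≠ e0 := (Finset.mem_erase.1 hj).1
      exact box_to_plane e0 j hj' m _ _
        (fun v hv => by rw [proj_idem]; exact hv j hj') hbox
    · intro hplanes
      have hg := planes_to_box e0 m (fun j hz z => F {e0, j} (ptv e0 j hz z) a = true) ?_
      · obtain ⟨T, x, hP, hR, h0, hT⟩ := hg
        refine ⟨T, x, fun t ht => ⟨(hP t ht).1, fun j hj => ?_⟩, hR, h0, hT⟩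
        rw [proj_pair_eq]
        exact (hP t ht).2 j hj
      · intro j hj
        obtain ⟨T, x, hP, hR, h0, hT⟩ :=
          hplanes j (Finset.mem_erase.2 ⟨hj, Finset.mem_univ j⟩)
        refine ⟨T, x, fun t ht => ?_, hR, h0, hT⟩
        obtain ⟨hb1, hb2, hz, hgd⟩ := hP t ht
        refine ⟨hb1, hb2, hz, ?_⟩
        show F {e0, j} (ptv e0 j (x t e0) (x t j)) a = true
        rw [← proj_pair_eq]
        exact hgd
  rw [hset]
  -- independence
  set mq : {q : Finset (Fin n) × (Fin n → ℤ) // q.1.card = 2 ∧ ∀ i ∉ q.1, q.2 i = 0} →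
      MeasurableSpace Ω :=
    fun q => MeasurableSpace.comap (fun a => F q.1.1 q.1.2 a) inferInstance with hmq
  set Tj : Fin n → Set {q : Finset (Fin n) × (Fin n → ℤ) // q.1.card = 2 ∧ ∀ i ∉ q.1, q.2 i = 0} :=
    fun j => {q | q.1.1 = {e0, j}} with hTj
  set mS : Fin n → MeasurableSpace Ω := fun j => ⨆ q ∈ Tj j, mq q with hmS
  have h_le : ∀ q, mq q ≤ ‹MeasurableSpace Ω› := by
    intro q
    rw [hmq]
    exact (hmeasF q.1.1 q.1.2).comap_le
  have hiIndep : iIndep mq μ := hindep.iIndep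
  have hEmeas : ∀ j, j ≠ e0 → MeasurableSet[mS j]
      {a | btPlane e0 j m (fun v => F {e0, j} (proj {e0, j} v) a = true)} := by
    intro j hj
    rw [btPlane_event_eq e0 j m (fun v a => F {e0, j} (proj {e0, j} v) a)]
    refine MeasurableSet.iUnion fun T => MeasurableSet.iUnion fun X =>
      MeasurableSet.iUnion fun _ => MeasurableSet.iInter fun t => ?_
    have hcard : ({e0, j} : Finset (Fin n)).card = 2 := by
      rw [Finset.card_insert_of_notMem, Finset.card_singleton]
      rw [Finset.mem_singleton]
      exact fun he => hj he.symm
    have hzero : ∀ i ∉ ({e0, j} : Finset (Fin n)), proj {e0, j} (X t) i = 0 := by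
      intro i hi
      unfold proj
      rw [if_neg hi]
    have hqT : (⟨({e0, j}, proj {e0, j} (X t)), hcard, hzero⟩ :
        {q : Finset (Fin n) × (Fin n → ℤ) // q.1.card = 2 ∧ ∀ i ∉ q.1, q.2 i = 0}) ∈ Tj j := rfl
    have hle2 : mq ⟨({e0, j}, proj {e0, j} (X t)), hcard, hzero⟩ ≤ mS j := by
      rw [hmS]
      exact le_biSup mq hqT
    refine hle2 _ ?_
    rw [hmq]
    exact ⟨{true}, MeasurableSpace.measurableSet_top, rfl⟩
  have hprod : ∀ s : Finset (Fin n), (∀ j ∈ s, j ≠ e0) →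
      μ (⋂ j ∈ s, {a | btPlane e0 j m (fun v => F {e0, j} (proj {e0, j} v) a = true)}) =
      ∏ j ∈ s, μ {a | btPlane e0 j m (fun v => F {e0, j} (proj {e0, j} v) a = true)} := by
    intro s
    induction s using Finset.induction with
    | empty => intro _; simp
    | @insert j s' hjs ih =>
      intro hne
      have hj : j ≠ e0 := hne j (Finset.mem_insert_self j s')
      have hne' : ∀ j' ∈ s', j' ≠ e0 := fun j' hj' => hne j' (Finset.mem_insert_of_mem hj')
      rw [Finset.set_biInter_insert, Finset.prod_insert hjs, ← ih hne']
      have hdisj : Disjoint (Tj j) (⋃ j' ∈ (s' : Set (Fin n)), Tj j') := by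
        rw [Set.disjoint_left]
        rintro q hq hq'
        simp only [Set.mem_iUnion] at hq'
        obtain ⟨j', hj'mem, hq2⟩ := hq'
        have hqA : (q : Finset (Fin n) × (Fin n → ℤ)).1 = {e0, j} := hq
        have hqB : (q : Finset (Fin n) × (Fin n → ℤ)).1 = {e0, j'} := hq2
        have hjj : j = j' := by
          have hpair : ({e0, j} : Finset (Fin n)) = {e0, j'} := hqA.symm.trans hqB
          have h1 : j ∈ ({e0, j'} : Finset (Fin n)) := hpair ▸ mem_pair_right e0 j
          rcases Finset.mem_insert.1 h1 with hh | hh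
          · exact absurd hh hj
          · exact Finset.mem_singleton.1 hh
        rw [hjj] at hjs
        exact hjs hj'mem
      have hI : Indep (⨆ q ∈ Tj j, mq q)
          (⨆ q ∈ (⋃ j' ∈ (s' : Set (Fin n)), Tj j'), mq q) μ :=
        indep_iSup_of_disjoint h_le hiIndep hdisj
      have hle3 : (⨆ j' ∈ s', mS j') ≤
          ⨆ q ∈ (⋃ j' ∈ (s' : Set (Fin n)), Tj j'), mq q := by
        refine iSup₂_le fun j' hj' => ?_
        rw [hmS]
        refine iSup₂_le fun q hq => le_iSup₂ (f := fun q _ => mq q) q ?_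
        exact Set.mem_biUnion hj' hq
      have hI2 : Indep (mS j) (⨆ j' ∈ s', mS j') μ := by
        rw [hmS]
        exact indep_of_indep_of_le_right hI hle3
      have hmeas2 : MeasurableSet[⨆ j' ∈ s', mS j']
          (⋂ j' ∈ s', {a | btPlane e0 j' m (fun v => F {e0, j'} (proj {e0, j'} v) a = true)}) := by
        refine MeasurableSet.iInter fun j' => MeasurableSet.iInter fun hj' => ?_
        exact (le_biSup mS hj') _ (hEmeas j' (hne' j' hj'))
      exact (Indep_iff _ _ _).1 hI2 _ _ (hEmeas j hj) hmeas2
  exact hprod (Finset.univ.erase e0) (fun j hj => (Finset.mem_erase.1 hj).1)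

end BernoulliHyperplane
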